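/- Let (H, m, Φ) be a cocommutative weak twisted post-Hopf algebra over a field k with μ̄(a ⊗ b) := Φ(a₁)·m(a₂ ⊗ b) satisfying μ̄(1 ⊗ a) = a, and let S : H → H satisfy μ̄(a₁ ⊗ S(a₂)) = ε(a)·1 for all a ∈ H. If also μ̄(S(a₁) ⊗ a₂) = ε(a)·1 for all a ∈ H, then Φ = id. -/

import Mathlib

open TensorProduct

noncomputable def mbar (k : Type*) {H : Type*} [Field k] [Ring H] [HopfAlgebra k H]
    (Φ : H →ₗ[k] H) (m : H ⊗[k] H →ₗ[k] H) : H ⊗[k] H →ₗ[k] H :=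
  (LinearMap.mul' k H) ∘ₗ (TensorProduct.map Φ m) ∘ₗ
    (TensorProduct.assoc k H H H).toLinearMap ∘ₗ
    (TensorProduct.map Coalgebra.comul LinearMap.id)

section Aux3
variable {k H : Type*} [Field k] [Ring H] [HopfAlgebra k H]
  (m : H ⊗[k] H →ₗ[k] H) (Φ : H →ₗ[k] H)

lemma mbar_tmul {ι : Type*} (a b : H) (r : Coalgebra.Repr k a ι) :
    mbar k Φ m (a ⊗ₜ[k] b) = ∑ i ∈ r.index, Φ (r.left i) * m (r.right i ⊗ₜ[k] b) := by
  have h1 : (TensorProduct.map (Coalgebra.comul (R := k)) (LinearMap.id (R := k) (M := H)))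
      (a ⊗ₜ[k] b) = (∑ i ∈ r.index, r.left i ⊗ₜ[k] r.right i) ⊗ₜ[k] b := by
    rw [r.eq]; rfl
  rw [mbar]
  simp only [LinearMap.comp_apply, h1, TensorProduct.sum_tmul, map_sum,
    LinearEquiv.coe_coe, TensorProduct.assoc_tmul, TensorProduct.map_tmul,
    LinearMap.mul'_apply]

lemma sum_counit_smul (a : H) (r : Coalgebra.Repr k a (H × H)) :
    ∑ i ∈ r.index, (Coalgebra.counit (R := k) (r.left i)) • r.right i = a := by
  have := congrArg (TensorProduct.lid k H) (Coalgebra.sum_counit_tmul_eq r)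
  rw [map_sum] at this
  simpa using this

lemma sum_smul_counit (a : H) (r : Coalgebra.Repr k a (H × H)) :
    ∑ i ∈ r.index, (Coalgebra.counit (R := k) (r.right i)) • r.left i = a := by
  have := congrArg (TensorProduct.rid k H) (Coalgebra.sum_tmul_counit_eq r)
  rw [map_sum] at this
  simpa using this

lemma h5_pt
    (h5 : m ∘ₗ TensorProduct.map LinearMap.id (LinearMap.mul' k H)
      = (LinearMap.mul' k H) ∘ₗ TensorProduct.map m m ∘ₗ
          (TensorProduct.tensorTensorTensorComm k H H H H).toLinearMap ∘ₗ
          TensorProduct.map Coalgebra.comul LinearMap.id)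
    (x u v : H) (r : Coalgebra.Repr k x (H × H)) :
    m (x ⊗ₜ[k] (u * v))
      = ∑ i ∈ r.index, m (r.left i ⊗ₜ[k] u) * m (r.right i ⊗ₜ[k] v) := by
  have := LinearMap.congr_fun h5 (x ⊗ₜ[k] (u ⊗ₜ[k] v))
  simp only [LinearMap.comp_apply, TensorProduct.map_tmul, LinearMap.id_coe, id_eq,
    LinearMap.mul'_apply, LinearEquiv.coe_coe] at this
  rw [this, ← r.eq]
  simp [TensorProduct.sum_tmul, map_sum]

lemma m_comul_repr
    (hm_comul : Coalgebra.comul ∘ₗ m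
      = (TensorProduct.map m m) ∘ₗ (TensorProduct.tensorTensorTensorComm k H H H H).toLinearMap
          ∘ₗ (TensorProduct.map Coalgebra.comul Coalgebra.comul))
    (x y : H) (rx : Coalgebra.Repr k x (H × H)) (ry : Coalgebra.Repr k y (H × H)) :
    Coalgebra.comul (R := k) (m (x ⊗ₜ[k] y))
      = ∑ i ∈ rx.index, ∑ j ∈ ry.index,
          m (rx.left i ⊗ₜ[k] ry.left j) ⊗ₜ[k] m (rx.right i ⊗ₜ[k] ry.right j) := by
  have := LinearMap.congr_fun hm_comul (x ⊗ₜ[k] y)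
  simp only [LinearMap.comp_apply, TensorProduct.map_tmul, LinearEquiv.coe_coe] at this
  rw [this, ← rx.eq, ← ry.eq]
  simp [TensorProduct.sum_tmul, TensorProduct.tmul_sum, map_sum]
  rw [Finset.sum_comm]

lemma phi_comul_repr
    (hΦ_comul : Coalgebra.comul ∘ₗ Φ = TensorProduct.map Φ Φ ∘ₗ Coalgebra.comul)
    (x : H) (r : Coalgebra.Repr k x (H × H)) :
    Coalgebra.comul (R := k) (Φ x) = ∑ i ∈ r.index, Φ (r.left i) ⊗ₜ[k] Φ (r.right i) := by
  have := LinearMap.congr_fun hΦ_comul x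
  simp only [LinearMap.comp_apply] at this
  rw [this, ← r.eq]
  simp [map_sum]

/-- swap of the first two legs of the iterated comultiplication, for cocommutative. -/
lemma swap12
    (hcoc : ∀ a : H, (TensorProduct.comm k H H) (Coalgebra.comul (R := k) a)
      = Coalgebra.comul a)
    (y : H) (r : Coalgebra.Repr k y (H × H)) (rr : ∀ i, Coalgebra.Repr k (r.right i) (H × H)) :
    ∑ i ∈ r.index, ∑ s ∈ (rr i).index,
      (rr i).left s ⊗ₜ[k] (r.left i ⊗ₜ[k] (rr i).right s)
    = ∑ i ∈ r.index, ∑ s ∈ (rr i).index,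
      r.left i ⊗ₜ[k] ((rr i).left s ⊗ₜ[k] (rr i).right s) := by
  classical
  set rl : ∀ i, Coalgebra.Repr k (r.left i) (H × H) := fun i => Coalgebra.Repr.arbitrary k (r.left i)
  have c3 := Coalgebra.sum_tmul_tmul_eq r rl rr
  -- c3 : ∑ i, ∑ j ∈ (rl i).index, (rl i).left j ⊗ (rl i).right j ⊗ r.right i
  --    = ∑ i, ∑ s ∈ (rr i).index, r.left i ⊗ (rr i).left s ⊗ (rr i).right s
  set P : H ⊗[k] (H ⊗[k] H) →ₗ[k] H ⊗[k] (H ⊗[k] H) :=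
    (TensorProduct.assoc k H H H).toLinearMap ∘ₗ
      (LinearMap.rTensor H (TensorProduct.comm k H H).toLinearMap) ∘ₗ
      (TensorProduct.assoc k H H H).symm.toLinearMap with hPdef
  have hP : ∀ p q w : H, P (p ⊗ₜ[k] (q ⊗ₜ[k] w)) = q ⊗ₜ[k] (p ⊗ₜ[k] w) := by
    intro p q w
    simp [hPdef]
  -- LHS = P (RHS)
  have h1 : ∑ i ∈ r.index, ∑ s ∈ (rr i).index,
      (rr i).left s ⊗ₜ[k] (r.left i ⊗ₜ[k] (rr i).right s)
      = P (∑ i ∈ r.index, ∑ s ∈ (rr i).index,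
          r.left i ⊗ₜ[k] ((rr i).left s ⊗ₜ[k] (rr i).right s)) := by
    rw [map_sum]
    refine Finset.sum_congr rfl fun i _ => ?_
    rw [map_sum]
    exact Finset.sum_congr rfl fun s _ => (hP _ _ _).symm
  have h2 : ∀ i ∈ r.index,
      P (∑ j ∈ (rl i).index, (rl i).left j ⊗ₜ[k] ((rl i).right j ⊗ₜ[k] r.right i))
      = ∑ j ∈ (rl i).index, (rl i).left j ⊗ₜ[k] ((rl i).right j ⊗ₜ[k] r.right i) := by
    intro i _
    rw [map_sum]
    have hflip : ∑ j ∈ (rl i).index, (rl i).right j ⊗ₜ[k] (rl i).left j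
        = ∑ j ∈ (rl i).index, (rl i).left j ⊗ₜ[k] (rl i).right j := by
      have := hcoc (r.left i)
      rw [← (rl i).eq, map_sum] at this
      simpa using this
    have key := congrArg (fun t => ((TensorProduct.assoc k H H H).toLinearMap ∘ₗ
        ((TensorProduct.mk k (H ⊗[k] H) H).flip (r.right i))) t) hflip
    simp only [map_sum, LinearMap.comp_apply, LinearMap.flip_apply,
      TensorProduct.mk_apply, LinearEquiv.coe_coe, TensorProduct.assoc_tmul] at key
    calc ∑ j ∈ (rl i).index, P ((rl i).left j ⊗ₜ[k] ((rl i).right j ⊗ₜ[k] r.right i))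
        = ∑ j ∈ (rl i).index, (rl i).right j ⊗ₜ[k] ((rl i).left j ⊗ₜ[k] r.right i) :=
          Finset.sum_congr rfl fun j _ => hP _ _ _
      _ = ∑ j ∈ (rl i).index, (rl i).left j ⊗ₜ[k] ((rl i).right j ⊗ₜ[k] r.right i) := key
  calc ∑ i ∈ r.index, ∑ s ∈ (rr i).index,
      (rr i).left s ⊗ₜ[k] (r.left i ⊗ₜ[k] (rr i).right s)
      = P (∑ i ∈ r.index, ∑ s ∈ (rr i).index,
          r.left i ⊗ₜ[k] ((rr i).left s ⊗ₜ[k] (rr i).right s)) := h1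
    _ = P (∑ i ∈ r.index, ∑ j ∈ (rl i).index,
          (rl i).left j ⊗ₜ[k] ((rl i).right j ⊗ₜ[k] r.right i)) := by rw [c3]
    _ = ∑ i ∈ r.index, P (∑ j ∈ (rl i).index,
          (rl i).left j ⊗ₜ[k] ((rl i).right j ⊗ₜ[k] r.right i)) := map_sum _ _ _
    _ = ∑ i ∈ r.index, ∑ j ∈ (rl i).index,
          (rl i).left j ⊗ₜ[k] ((rl i).right j ⊗ₜ[k] r.right i) := Finset.sum_congr rfl h2
    _ = _ := c3


lemma hN_lemma (q y : H) (r' : Coalgebra.Repr k y (H × H)) :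
    ((TensorProduct.assoc k H H H).toLinearMap ∘ₗ
      (LinearMap.rTensor H (TensorProduct.comm k H H).toLinearMap) ∘ₗ
      (TensorProduct.assoc k H H H).symm.toLinearMap ∘ₗ
      (LinearMap.lTensor H (Coalgebra.comul (R := k)))) (q ⊗ₜ[k] y)
    = ∑ l ∈ r'.index, r'.left l ⊗ₜ[k] (q ⊗ₜ[k] r'.right l) := by
  have h0 : (LinearMap.lTensor H (Coalgebra.comul (R := k))) (q ⊗ₜ[k] y)
      = ∑ l ∈ r'.index, q ⊗ₜ[k] (r'.left l ⊗ₜ[k] r'.right l) := by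
    rw [LinearMap.lTensor_tmul, ← r'.eq, TensorProduct.tmul_sum]
  simp [LinearMap.comp_apply, h0, map_sum]

lemma swap4
    (hcoc : ∀ a : H, (TensorProduct.comm k H H) (Coalgebra.comul (R := k) a)
      = Coalgebra.comul a)
    (a : H) (ra : Coalgebra.Repr k a (H × H))
    (rx : ∀ i, Coalgebra.Repr k (ra.left i) (H × H)) (ry : ∀ i, Coalgebra.Repr k (ra.right i) (H × H)) :
    ∑ i ∈ ra.index, ∑ j ∈ (rx i).index, ∑ l ∈ (ry i).index,
      (rx i).left j ⊗ₜ[k] ((ry i).left l ⊗ₜ[k] ((rx i).right j ⊗ₜ[k] (ry i).right l))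
    = ∑ i ∈ ra.index, ∑ j ∈ (rx i).index, ∑ l ∈ (ry i).index,
      (rx i).left j ⊗ₜ[k] ((rx i).right j ⊗ₜ[k] ((ry i).left l ⊗ₜ[k] (ry i).right l)) := by
  classical
  set rz : ∀ i, ∀ l : (ry i).ι, Coalgebra.Repr k ((ry i).right l) (H × H) :=
    fun i l => Coalgebra.Repr.arbitrary k ((ry i).right l) with hrz
  have c3 := Coalgebra.sum_tmul_tmul_eq ra rx ry
  set N : H ⊗[k] H →ₗ[k] H ⊗[k] (H ⊗[k] H) :=
    (TensorProduct.assoc k H H H).toLinearMap ∘ₗ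
      (LinearMap.rTensor H (TensorProduct.comm k H H).toLinearMap) ∘ₗ
      (TensorProduct.assoc k H H H).symm.toLinearMap ∘ₗ
      (LinearMap.lTensor H (Coalgebra.comul (R := k))) with hNdef
  -- apply lTensor N to both sides of c3
  have h1 : (LinearMap.lTensor H N) (∑ i ∈ ra.index, ∑ j ∈ (rx i).index,
        (rx i).left j ⊗ₜ[k] ((rx i).right j ⊗ₜ[k] ra.right i))
      = ∑ i ∈ ra.index, ∑ j ∈ (rx i).index, ∑ l ∈ (ry i).index,
        (rx i).left j ⊗ₜ[k] ((ry i).left l ⊗ₜ[k] ((rx i).right j ⊗ₜ[k] (ry i).right l)) := by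
    rw [map_sum]
    refine Finset.sum_congr rfl fun i _ => ?_
    rw [map_sum]
    refine Finset.sum_congr rfl fun j _ => ?_
    rw [LinearMap.lTensor_tmul, hNdef, hN_lemma _ _ (ry i), TensorProduct.tmul_sum]
  have h2 : (LinearMap.lTensor H (LinearMap.lTensor H (Coalgebra.comul (R := k))))
        (∑ i ∈ ra.index, ∑ j ∈ (rx i).index,
          (rx i).left j ⊗ₜ[k] ((rx i).right j ⊗ₜ[k] ra.right i))
      = ∑ i ∈ ra.index, ∑ j ∈ (rx i).index, ∑ l ∈ (ry i).index,
        (rx i).left j ⊗ₜ[k] ((rx i).right j ⊗ₜ[k] ((ry i).left l ⊗ₜ[k] (ry i).right l)) := by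
    rw [map_sum]
    refine Finset.sum_congr rfl fun i _ => ?_
    rw [map_sum]
    refine Finset.sum_congr rfl fun j _ => ?_
    rw [LinearMap.lTensor_tmul, LinearMap.lTensor_tmul, ← (ry i).eq, TensorProduct.tmul_sum,
      TensorProduct.tmul_sum]
  have h3 : (LinearMap.lTensor H N) (∑ i ∈ ra.index, ∑ l ∈ (ry i).index,
        ra.left i ⊗ₜ[k] ((ry i).left l ⊗ₜ[k] (ry i).right l))
      = ∑ i ∈ ra.index, ra.left i ⊗ₜ[k] (∑ l ∈ (ry i).index, ∑ s ∈ (rz i l).index,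
          (rz i l).left s ⊗ₜ[k] ((ry i).left l ⊗ₜ[k] (rz i l).right s)) := by
    rw [map_sum]
    refine Finset.sum_congr rfl fun i _ => ?_
    rw [map_sum, TensorProduct.tmul_sum]
    refine Finset.sum_congr rfl fun l _ => ?_
    rw [LinearMap.lTensor_tmul, hNdef, hN_lemma _ _ (rz i l), TensorProduct.tmul_sum]
  have h4 : (LinearMap.lTensor H (LinearMap.lTensor H (Coalgebra.comul (R := k))))
        (∑ i ∈ ra.index, ∑ l ∈ (ry i).index,
          ra.left i ⊗ₜ[k] ((ry i).left l ⊗ₜ[k] (ry i).right l))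
      = ∑ i ∈ ra.index, ra.left i ⊗ₜ[k] (∑ l ∈ (ry i).index, ∑ s ∈ (rz i l).index,
          (ry i).left l ⊗ₜ[k] ((rz i l).left s ⊗ₜ[k] (rz i l).right s)) := by
    rw [map_sum]
    refine Finset.sum_congr rfl fun i _ => ?_
    rw [map_sum, TensorProduct.tmul_sum]
    refine Finset.sum_congr rfl fun l _ => ?_
    rw [LinearMap.lTensor_tmul, LinearMap.lTensor_tmul, ← (rz i l).eq,
      TensorProduct.tmul_sum, TensorProduct.tmul_sum]
  have h5 : ∀ i, (∑ l ∈ (ry i).index, ∑ s ∈ (rz i l).index,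
        (rz i l).left s ⊗ₜ[k] ((ry i).left l ⊗ₜ[k] (rz i l).right s))
      = ∑ l ∈ (ry i).index, ∑ s ∈ (rz i l).index,
        (ry i).left l ⊗ₜ[k] ((rz i l).left s ⊗ₜ[k] (rz i l).right s) :=
    fun i => swap12 hcoc (ra.right i) (ry i) (rz i)
  calc ∑ i ∈ ra.index, ∑ j ∈ (rx i).index, ∑ l ∈ (ry i).index,
      (rx i).left j ⊗ₜ[k] ((ry i).left l ⊗ₜ[k] ((rx i).right j ⊗ₜ[k] (ry i).right l))
      = (LinearMap.lTensor H N) (∑ i ∈ ra.index, ∑ j ∈ (rx i).index,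
          (rx i).left j ⊗ₜ[k] ((rx i).right j ⊗ₜ[k] ra.right i)) := h1.symm
    _ = (LinearMap.lTensor H N) (∑ i ∈ ra.index, ∑ l ∈ (ry i).index,
          ra.left i ⊗ₜ[k] ((ry i).left l ⊗ₜ[k] (ry i).right l)) := by rw [c3]
    _ = ∑ i ∈ ra.index, ra.left i ⊗ₜ[k] (∑ l ∈ (ry i).index, ∑ s ∈ (rz i l).index,
          (rz i l).left s ⊗ₜ[k] ((ry i).left l ⊗ₜ[k] (rz i l).right s)) := h3
    _ = ∑ i ∈ ra.index, ra.left i ⊗ₜ[k] (∑ l ∈ (ry i).index, ∑ s ∈ (rz i l).index,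
          (ry i).left l ⊗ₜ[k] ((rz i l).left s ⊗ₜ[k] (rz i l).right s)) := by
        exact Finset.sum_congr rfl fun i _ => by rw [h5 i]
    _ = (LinearMap.lTensor H (LinearMap.lTensor H (Coalgebra.comul (R := k))))
          (∑ i ∈ ra.index, ∑ l ∈ (ry i).index,
            ra.left i ⊗ₜ[k] ((ry i).left l ⊗ₜ[k] (ry i).right l)) := h4.symm
    _ = (LinearMap.lTensor H (LinearMap.lTensor H (Coalgebra.comul (R := k))))
          (∑ i ∈ ra.index, ∑ j ∈ (rx i).index,
            (rx i).left j ⊗ₜ[k] ((rx i).right j ⊗ₜ[k] ra.right i)) := by rw [c3]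
    _ = _ := h2

lemma comul_mbar
    (hm_comul : Coalgebra.comul ∘ₗ m
      = (TensorProduct.map m m) ∘ₗ (TensorProduct.tensorTensorTensorComm k H H H H).toLinearMap
          ∘ₗ (TensorProduct.map Coalgebra.comul Coalgebra.comul))
    (hΦ_comul : Coalgebra.comul ∘ₗ Φ = TensorProduct.map Φ Φ ∘ₗ Coalgebra.comul)
    (hcoc : ∀ a : H, (TensorProduct.comm k H H) (Coalgebra.comul (R := k) a)
      = Coalgebra.comul a)
    (a b : H) (ra : Coalgebra.Repr k a (H × H)) (rb : Coalgebra.Repr k b (H × H)) :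
    Coalgebra.comul (R := k) (mbar k Φ m (a ⊗ₜ[k] b))
      = ∑ i ∈ ra.index, ∑ p ∈ rb.index,
          mbar k Φ m (ra.left i ⊗ₜ[k] rb.left p) ⊗ₜ[k]
            mbar k Φ m (ra.right i ⊗ₜ[k] rb.right p) := by
  classical
  set rx : ∀ i, Coalgebra.Repr k (ra.left i) (H × H) :=
    fun i => Coalgebra.Repr.arbitrary k (ra.left i) with hrx
  set ry : ∀ i, Coalgebra.Repr k (ra.right i) (H × H) :=
    fun i => Coalgebra.Repr.arbitrary k (ra.right i) with hry
  -- the collapse map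
  set F : H → (H ⊗[k] H →ₗ[k] H) := fun c =>
    (LinearMap.mul' k H) ∘ₗ TensorProduct.map Φ (m ∘ₗ (TensorProduct.mk k H H).flip c)
    with hF
  set Q : H → H → (H ⊗[k] (H ⊗[k] (H ⊗[k] H)) →ₗ[k] H ⊗[k] H) := fun c₁ c₂ =>
    TensorProduct.map (F c₁) (F c₂) ∘ₗ (TensorProduct.assoc k H H (H ⊗[k] H)).symm.toLinearMap
    with hQ
  have hQapp : ∀ (c₁ c₂ α β γ δ : H), Q c₁ c₂ (α ⊗ₜ[k] (β ⊗ₜ[k] (γ ⊗ₜ[k] δ)))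
      = (Φ α * m (β ⊗ₜ[k] c₁)) ⊗ₜ[k] (Φ γ * m (δ ⊗ₜ[k] c₂)) := by
    intro c₁ c₂ α β γ δ
    simp [hQ, hF]
  have key : ∀ c₁ c₂ : H,
      (∑ i ∈ ra.index, ∑ j ∈ (rx i).index, ∑ l ∈ (ry i).index,
        (Φ ((rx i).left j) * m ((ry i).left l ⊗ₜ[k] c₁)) ⊗ₜ[k]
          (Φ ((rx i).right j) * m ((ry i).right l ⊗ₜ[k] c₂)))
      = ∑ i ∈ ra.index, ∑ j ∈ (rx i).index, ∑ l ∈ (ry i).index,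
        (Φ ((rx i).left j) * m ((rx i).right j ⊗ₜ[k] c₁)) ⊗ₜ[k]
          (Φ ((ry i).left l) * m ((ry i).right l ⊗ₜ[k] c₂)) := by
    intro c₁ c₂
    have := congrArg (Q c₁ c₂) (swap4 hcoc a ra rx ry)
    simp only [map_sum, hQapp] at this
    exact this
  -- expand the LHS
  have lhs_eq : Coalgebra.comul (R := k) (mbar k Φ m (a ⊗ₜ[k] b))
      = ∑ i ∈ ra.index, ∑ j ∈ (rx i).index, ∑ l ∈ (ry i).index, ∑ p ∈ rb.index,
          (Φ ((rx i).left j) * m ((ry i).left l ⊗ₜ[k] rb.left p)) ⊗ₜ[k]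
            (Φ ((rx i).right j) * m ((ry i).right l ⊗ₜ[k] rb.right p)) := by
    rw [mbar_tmul m Φ a b ra, map_sum]
    refine Finset.sum_congr rfl fun i _ => ?_
    rw [Bialgebra.comul_mul, phi_comul_repr Φ hΦ_comul _ (rx i),
      m_comul_repr m hm_comul _ _ (ry i) rb, Finset.sum_mul_sum]
    refine Finset.sum_congr rfl fun j _ => Finset.sum_congr rfl fun l _ => ?_
    rw [Finset.mul_sum]
    exact Finset.sum_congr rfl fun p _ => Algebra.TensorProduct.tmul_mul_tmul _ _ _ _
  -- expand the RHS
  have rhs_eq : (∑ i ∈ ra.index, ∑ p ∈ rb.index,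
        mbar k Φ m (ra.left i ⊗ₜ[k] rb.left p) ⊗ₜ[k]
          mbar k Φ m (ra.right i ⊗ₜ[k] rb.right p))
      = ∑ i ∈ ra.index, ∑ p ∈ rb.index, ∑ j ∈ (rx i).index, ∑ l ∈ (ry i).index,
          (Φ ((rx i).left j) * m ((rx i).right j ⊗ₜ[k] rb.left p)) ⊗ₜ[k]
            (Φ ((ry i).left l) * m ((ry i).right l ⊗ₜ[k] rb.right p)) := by
    refine Finset.sum_congr rfl fun i _ => Finset.sum_congr rfl fun p _ => ?_
    rw [mbar_tmul m Φ _ _ (rx i), mbar_tmul m Φ _ _ (ry i),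
      TensorProduct.sum_tmul]
    exact Finset.sum_congr rfl fun j _ => TensorProduct.tmul_sum _ _ _
  rw [lhs_eq, rhs_eq]
  -- reorder sums and apply `key`
  calc ∑ i ∈ ra.index, ∑ j ∈ (rx i).index, ∑ l ∈ (ry i).index, ∑ p ∈ rb.index,
        (Φ ((rx i).left j) * m ((ry i).left l ⊗ₜ[k] rb.left p)) ⊗ₜ[k]
          (Φ ((rx i).right j) * m ((ry i).right l ⊗ₜ[k] rb.right p))
      = ∑ i ∈ ra.index, ∑ p ∈ rb.index, ∑ j ∈ (rx i).index, ∑ l ∈ (ry i).index,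
        (Φ ((rx i).left j) * m ((ry i).left l ⊗ₜ[k] rb.left p)) ⊗ₜ[k]
          (Φ ((rx i).right j) * m ((ry i).right l ⊗ₜ[k] rb.right p)) := by
        refine Finset.sum_congr rfl fun i _ => ?_
        calc ∑ j ∈ (rx i).index, ∑ l ∈ (ry i).index, ∑ p ∈ rb.index,
            (Φ ((rx i).left j) * m ((ry i).left l ⊗ₜ[k] rb.left p)) ⊗ₜ[k]
              (Φ ((rx i).right j) * m ((ry i).right l ⊗ₜ[k] rb.right p))
            = ∑ j ∈ (rx i).index, ∑ p ∈ rb.index, ∑ l ∈ (ry i).index,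
              (Φ ((rx i).left j) * m ((ry i).left l ⊗ₜ[k] rb.left p)) ⊗ₜ[k]
                (Φ ((rx i).right j) * m ((ry i).right l ⊗ₜ[k] rb.right p)) :=
              Finset.sum_congr rfl fun j _ => Finset.sum_comm
          _ = _ := Finset.sum_comm
    _ = ∑ p ∈ rb.index, ∑ i ∈ ra.index, ∑ j ∈ (rx i).index, ∑ l ∈ (ry i).index,
        (Φ ((rx i).left j) * m ((ry i).left l ⊗ₜ[k] rb.left p)) ⊗ₜ[k]
          (Φ ((rx i).right j) * m ((ry i).right l ⊗ₜ[k] rb.right p)) :=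
        Finset.sum_comm
    _ = ∑ p ∈ rb.index, ∑ i ∈ ra.index, ∑ j ∈ (rx i).index, ∑ l ∈ (ry i).index,
        (Φ ((rx i).left j) * m ((rx i).right j ⊗ₜ[k] rb.left p)) ⊗ₜ[k]
          (Φ ((ry i).left l) * m ((ry i).right l ⊗ₜ[k] rb.right p)) :=
        Finset.sum_congr rfl fun p _ => key _ _
    _ = _ := by
        rw [Finset.sum_comm]

lemma assoc_mbar
    (hm_comul : Coalgebra.comul ∘ₗ m
      = (TensorProduct.map m m) ∘ₗ (TensorProduct.tensorTensorTensorComm k H H H H).toLinearMap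
          ∘ₗ (TensorProduct.map Coalgebra.comul Coalgebra.comul))
    (hΦ_comul : Coalgebra.comul ∘ₗ Φ = TensorProduct.map Φ Φ ∘ₗ Coalgebra.comul)
    (h3 : Φ ∘ₗ mbar k Φ m = mbar k Φ m ∘ₗ TensorProduct.map LinearMap.id Φ)
    (h4 : m ∘ₗ TensorProduct.map LinearMap.id m
      = m ∘ₗ TensorProduct.map (mbar k Φ m) LinearMap.id ∘ₗ
          (TensorProduct.assoc k H H H).symm.toLinearMap)
    (h5 : m ∘ₗ TensorProduct.map LinearMap.id (LinearMap.mul' k H)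
      = (LinearMap.mul' k H) ∘ₗ TensorProduct.map m m ∘ₗ
          (TensorProduct.tensorTensorTensorComm k H H H H).toLinearMap ∘ₗ
          TensorProduct.map Coalgebra.comul LinearMap.id)
    (hcoc : ∀ a : H, (TensorProduct.comm k H H) (Coalgebra.comul (R := k) a)
      = Coalgebra.comul a)
    (a b c : H) :
    mbar k Φ m (mbar k Φ m (a ⊗ₜ[k] b) ⊗ₜ[k] c)
      = mbar k Φ m (a ⊗ₜ[k] mbar k Φ m (b ⊗ₜ[k] c)) := by
  classical
  have h3p : ∀ x y : H, Φ (mbar k Φ m (x ⊗ₜ[k] y)) = mbar k Φ m (x ⊗ₜ[k] Φ y) := by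
    intro x y
    have := LinearMap.congr_fun h3 (x ⊗ₜ[k] y)
    simpa using this
  have h4p : ∀ x y z : H, m (x ⊗ₜ[k] m (y ⊗ₜ[k] z))
      = m (mbar k Φ m (x ⊗ₜ[k] y) ⊗ₜ[k] z) := by
    intro x y z
    have := LinearMap.congr_fun h4 (x ⊗ₜ[k] (y ⊗ₜ[k] z))
    simpa using this
  set ra : Coalgebra.Repr k a (H × H) := Coalgebra.Repr.arbitrary k a with hra
  set rb : Coalgebra.Repr k b (H × H) := Coalgebra.Repr.arbitrary k b with hrb
  set r1 : ∀ i, Coalgebra.Repr k (ra.left i) (H × H) :=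
    fun i => Coalgebra.Repr.arbitrary k (ra.left i) with hr1
  set r2 : ∀ i, Coalgebra.Repr k (ra.right i) (H × H) :=
    fun i => Coalgebra.Repr.arbitrary k (ra.right i) with hr2
  -- a representation of `comul (mbar (a ⊗ b))`
  set rY : Coalgebra.Repr k (mbar k Φ m (a ⊗ₜ[k] b)) ((H × H) × (H × H)) :=
    { index := ra.index ×ˢ rb.index
      left := fun ip => mbar k Φ m (ra.left ip.1 ⊗ₜ[k] rb.left ip.2)
      right := fun ip => mbar k Φ m (ra.right ip.1 ⊗ₜ[k] rb.right ip.2)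
      eq := by
        rw [Finset.sum_product]
        exact (comul_mbar m Φ hm_comul hΦ_comul hcoc a b ra rb).symm } with hrY
  -- expand the LHS
  have lhs_eq : mbar k Φ m (mbar k Φ m (a ⊗ₜ[k] b) ⊗ₜ[k] c)
      = ∑ i ∈ ra.index, ∑ p ∈ rb.index, ∑ j ∈ (r1 i).index,
          (Φ ((r1 i).left j) * m ((r1 i).right j ⊗ₜ[k] Φ (rb.left p)))
            * m (mbar k Φ m (ra.right i ⊗ₜ[k] rb.right p) ⊗ₜ[k] c) := by
    rw [mbar_tmul m Φ _ c rY]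
    rw [show rY.index = ra.index ×ˢ rb.index from rfl]
    rw [Finset.sum_product]
    refine Finset.sum_congr rfl fun i _ => Finset.sum_congr rfl fun p _ => ?_
    rw [show rY.left (i, p) = mbar k Φ m (ra.left i ⊗ₜ[k] rb.left p) from rfl,
      show rY.right (i, p) = mbar k Φ m (ra.right i ⊗ₜ[k] rb.right p) from rfl,
      h3p, mbar_tmul m Φ _ _ (r1 i), Finset.sum_mul]
  -- expand the RHS
  have rhs_eq : mbar k Φ m (a ⊗ₜ[k] mbar k Φ m (b ⊗ₜ[k] c))
      = ∑ i ∈ ra.index, ∑ p ∈ rb.index, ∑ j ∈ (r2 i).index,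
          Φ (ra.left i) * (m ((r2 i).left j ⊗ₜ[k] Φ (rb.left p))
            * m (mbar k Φ m ((r2 i).right j ⊗ₜ[k] rb.right p) ⊗ₜ[k] c)) := by
    rw [mbar_tmul m Φ _ _ ra]
    refine Finset.sum_congr rfl fun i _ => ?_
    rw [mbar_tmul m Φ _ _ rb, TensorProduct.tmul_sum, map_sum, Finset.mul_sum]
    refine Finset.sum_congr rfl fun p _ => ?_
    rw [h5_pt m h5 _ _ _ (r2 i), Finset.mul_sum]
    refine Finset.sum_congr rfl fun j _ => ?_
    rw [h4p]
  rw [lhs_eq, rhs_eq]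
  -- bridge via coassociativity
  have key : ∀ p : H × H,
      (∑ i ∈ ra.index, ∑ j ∈ (r1 i).index,
        Φ ((r1 i).left j) * (m ((r1 i).right j ⊗ₜ[k] Φ (rb.left p))
          * m (mbar k Φ m (ra.right i ⊗ₜ[k] rb.right p) ⊗ₜ[k] c)))
      = ∑ i ∈ ra.index, ∑ j ∈ (r2 i).index,
        Φ (ra.left i) * (m ((r2 i).left j ⊗ₜ[k] Φ (rb.left p))
          * m (mbar k Φ m ((r2 i).right j ⊗ₜ[k] rb.right p) ⊗ₜ[k] c)) := by
    intro p
    set g : H →ₗ[k] H := m ∘ₗ (TensorProduct.mk k H H).flip (Φ (rb.left p)) with hg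
    set h : H →ₗ[k] H := (m ∘ₗ (TensorProduct.mk k H H).flip c) ∘ₗ
      (mbar k Φ m) ∘ₗ (TensorProduct.mk k H H).flip (rb.right p) with hh
    set L : H ⊗[k] (H ⊗[k] H) →ₗ[k] H :=
      (LinearMap.mul' k H) ∘ₗ TensorProduct.map Φ
        ((LinearMap.mul' k H) ∘ₗ TensorProduct.map g h) with hL
    have hLapp : ∀ x y z : H, L (x ⊗ₜ[k] (y ⊗ₜ[k] z))
        = Φ x * (m (y ⊗ₜ[k] Φ (rb.left p))
            * m (mbar k Φ m (z ⊗ₜ[k] rb.right p) ⊗ₜ[k] c)) := by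
      intro x y z
      simp [hL, hg, hh]
    have := congrArg L (Coalgebra.sum_tmul_tmul_eq ra r1 r2)
    simp only [map_sum, hLapp] at this
    exact this
  calc ∑ i ∈ ra.index, ∑ p ∈ rb.index, ∑ j ∈ (r1 i).index,
      (Φ ((r1 i).left j) * m ((r1 i).right j ⊗ₜ[k] Φ (rb.left p)))
        * m (mbar k Φ m (ra.right i ⊗ₜ[k] rb.right p) ⊗ₜ[k] c)
      = ∑ p ∈ rb.index, ∑ i ∈ ra.index, ∑ j ∈ (r1 i).index,
        Φ ((r1 i).left j) * (m ((r1 i).right j ⊗ₜ[k] Φ (rb.left p))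
          * m (mbar k Φ m (ra.right i ⊗ₜ[k] rb.right p) ⊗ₜ[k] c)) := by
        rw [Finset.sum_comm]
        exact Finset.sum_congr rfl fun p _ => Finset.sum_congr rfl fun i _ =>
          Finset.sum_congr rfl fun j _ => mul_assoc _ _ _
    _ = ∑ p ∈ rb.index, ∑ i ∈ ra.index, ∑ j ∈ (r2 i).index,
        Φ (ra.left i) * (m ((r2 i).left j ⊗ₜ[k] Φ (rb.left p))
          * m (mbar k Φ m ((r2 i).right j ⊗ₜ[k] rb.right p) ⊗ₜ[k] c)) :=
        Finset.sum_congr rfl fun p _ => key p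
    _ = _ := Finset.sum_comm

end Aux3

theorem stmt15 (k H : Type*) [Field k] [Ring H] [HopfAlgebra k H]
    (m : H ⊗[k] H →ₗ[k] H) (Φ : H →ₗ[k] H)
    (hm_comul : Coalgebra.comul ∘ₗ m
      = (TensorProduct.map m m) ∘ₗ (TensorProduct.tensorTensorTensorComm k H H H H).toLinearMap
          ∘ₗ (TensorProduct.map Coalgebra.comul Coalgebra.comul))
    (hm_counit : Coalgebra.counit ∘ₗ m
      = (TensorProduct.lid k k).toLinearMap ∘ₗ
          TensorProduct.map Coalgebra.counit Coalgebra.counit)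
    (hΦ_comul : Coalgebra.comul ∘ₗ Φ = TensorProduct.map Φ Φ ∘ₗ Coalgebra.comul)
    (hΦ_counit : Coalgebra.counit ∘ₗ Φ = Coalgebra.counit)
    (h3 : Φ ∘ₗ mbar k Φ m = mbar k Φ m ∘ₗ TensorProduct.map LinearMap.id Φ)
    (h4 : m ∘ₗ TensorProduct.map LinearMap.id m
      = m ∘ₗ TensorProduct.map (mbar k Φ m) LinearMap.id ∘ₗ
          (TensorProduct.assoc k H H H).symm.toLinearMap)
    (h5 : m ∘ₗ TensorProduct.map LinearMap.id (LinearMap.mul' k H)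
      = (LinearMap.mul' k H) ∘ₗ TensorProduct.map m m ∘ₗ
          (TensorProduct.tensorTensorTensorComm k H H H H).toLinearMap ∘ₗ
          TensorProduct.map Coalgebra.comul LinearMap.id)
    (hcoc : ∀ a : H, (TensorProduct.comm k H H) (Coalgebra.comul (R := k) a)
      = Coalgebra.comul a)
    (hmbar1 : ∀ a : H, mbar k Φ m ((1 : H) ⊗ₜ[k] a) = a)
    (S : H →ₗ[k] H)
    (hS : ∀ a : H, mbar k Φ m (TensorProduct.map LinearMap.id S (Coalgebra.comul a))
      = (Coalgebra.counit (R := k) a) • (1 : H))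
    (hS' : ∀ a : H, mbar k Φ m (TensorProduct.map S LinearMap.id (Coalgebra.comul a))
      = (Coalgebra.counit (R := k) a) • (1 : H)) :
    Φ = LinearMap.id := by
  classical
  have h3p : ∀ x y : H, Φ (mbar k Φ m (x ⊗ₜ[k] y)) = mbar k Φ m (x ⊗ₜ[k] Φ y) := by
    intro x y
    have := LinearMap.congr_fun h3 (x ⊗ₜ[k] y)
    simpa using this
  have h4p : ∀ x y z : H, m (x ⊗ₜ[k] m (y ⊗ₜ[k] z))
      = m (mbar k Φ m (x ⊗ₜ[k] y) ⊗ₜ[k] z) := by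
    intro x y z
    have := LinearMap.congr_fun h4 (x ⊗ₜ[k] (y ⊗ₜ[k] z))
    simpa using this
  -- mbar (1 ⊗ b) = Φ 1 * m (1 ⊗ b)
  have mbar_one : ∀ b : H, mbar k Φ m ((1 : H) ⊗ₜ[k] b) = Φ 1 * m ((1 : H) ⊗ₜ[k] b) := by
    intro b
    have hcomul1 : (Coalgebra.comul (R := k) (1 : H)) = (1 : H) ⊗ₜ[k] (1 : H) := by
      rw [Bialgebra.comul_one, Algebra.TensorProduct.one_def]
    simp [mbar, hcomul1]
  have hb : ∀ b : H, Φ 1 * m ((1 : H) ⊗ₜ[k] b) = b := fun b => (mbar_one b).symm.trans (hmbar1 b)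
  -- Φ 1 = 1
  have hΦ1 : Φ 1 = 1 := by
    have h11 : mbar k Φ m ((1 : H) ⊗ₜ[k] (1 : H)) = 1 := hmbar1 1
    have hmm : m ((1 : H) ⊗ₜ[k] m ((1 : H) ⊗ₜ[k] (1 : H))) = m ((1 : H) ⊗ₜ[k] (1 : H)) := by
      rw [h4p, h11]
    set u : H := m ((1 : H) ⊗ₜ[k] (1 : H)) with hu
    have h1 : Φ 1 * u = u := by
      have := hb u
      rw [hmm] at this
      exact this
    have h2 : Φ 1 * u = 1 := hb 1
    have hu1 : u = 1 := by rw [← h1, h2]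
    rw [hu1] at h2
    simpa using h2
  -- pointwise S conditions
  have hS_r : ∀ (x : H) (r : Coalgebra.Repr k x (H × H)),
      ∑ j ∈ r.index, mbar k Φ m (r.left j ⊗ₜ[k] S (r.right j))
        = (Coalgebra.counit (R := k) x) • (1 : H) := by
    intro x r
    have := hS x
    rw [← r.eq, map_sum, map_sum] at this
    simpa using this
  have hS'_r : ∀ (x : H) (r : Coalgebra.Repr k x (H × H)),
      ∑ j ∈ r.index, mbar k Φ m (S (r.left j) ⊗ₜ[k] r.right j)
        = (Coalgebra.counit (R := k) x) • (1 : H) := by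
    intro x r
    have := hS' x
    rw [← r.eq, map_sum, map_sum] at this
    simpa using this
  -- mbar (a ⊗ 1) = a
  have mbar_a_one : ∀ a : H, mbar k Φ m (a ⊗ₜ[k] (1 : H)) = a := by
    intro a
    set ra : Coalgebra.Repr k a (H × H) := Coalgebra.Repr.arbitrary k a with hra
    set rl : ∀ i, Coalgebra.Repr k (ra.left i) (H × H) :=
      fun i => Coalgebra.Repr.arbitrary k (ra.left i) with hrl
    set rr : ∀ i, Coalgebra.Repr k (ra.right i) (H × H) :=
      fun i => Coalgebra.Repr.arbitrary k (ra.right i) with hrr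
    have hE := Coalgebra.sum_map_tmul_tmul_eq (LinearMap.id (R := k) (M := H)) S
      (LinearMap.id (R := k) (M := H)) a (repr := ra) (a₁ := rl) (a₂ := rr)
    set M : H ⊗[k] (H ⊗[k] H) →ₗ[k] H :=
      (mbar k Φ m) ∘ₗ LinearMap.lTensor H (mbar k Φ m) with hM
    have hMapp : ∀ x y z : H, M (x ⊗ₜ[k] (y ⊗ₜ[k] z))
        = mbar k Φ m (x ⊗ₜ[k] mbar k Φ m (y ⊗ₜ[k] z)) := by
      intro x y z
      simp [hM]
    have key := congrArg M hE
    simp only [map_sum, hMapp, LinearMap.id_coe, id_eq] at key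
    -- key : ∑ i ∑ j mbar (ra.left i ⊗ mbar (S ((rr i).left j) ⊗ (rr i).right j))
    --     = ∑ i ∑ j mbar ((rl i).left j ⊗ mbar (S ((rl i).right j) ⊗ ra.right i))
    have lhs_key : (∑ i ∈ ra.index, ∑ j ∈ (rr i).index,
          mbar k Φ m (ra.left i ⊗ₜ[k] mbar k Φ m (S ((rr i).left j) ⊗ₜ[k] (rr i).right j)))
        = mbar k Φ m (a ⊗ₜ[k] (1 : H)) := by
      calc ∑ i ∈ ra.index, ∑ j ∈ (rr i).index,
            mbar k Φ m (ra.left i ⊗ₜ[k] mbar k Φ m (S ((rr i).left j) ⊗ₜ[k] (rr i).right j))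
          = ∑ i ∈ ra.index, mbar k Φ m (ra.left i ⊗ₜ[k]
              (∑ j ∈ (rr i).index, mbar k Φ m (S ((rr i).left j) ⊗ₜ[k] (rr i).right j))) := by
            refine Finset.sum_congr rfl fun i _ => ?_
            rw [TensorProduct.tmul_sum, map_sum]
        _ = ∑ i ∈ ra.index, mbar k Φ m (ra.left i ⊗ₜ[k]
              ((Coalgebra.counit (R := k) (ra.right i)) • (1 : H))) := by
            refine Finset.sum_congr rfl fun i _ => ?_
            rw [hS'_r _ (rr i)]
        _ = ∑ i ∈ ra.index, (Coalgebra.counit (R := k) (ra.right i)) •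
              mbar k Φ m (ra.left i ⊗ₜ[k] (1 : H)) := by
            refine Finset.sum_congr rfl fun i _ => ?_
            rw [TensorProduct.tmul_smul, map_smul]
        _ = mbar k Φ m ((∑ i ∈ ra.index,
              (Coalgebra.counit (R := k) (ra.right i)) • ra.left i) ⊗ₜ[k] (1 : H)) := by
            rw [TensorProduct.sum_tmul, map_sum]
            exact Finset.sum_congr rfl fun i _ => by
              rw [← TensorProduct.smul_tmul', map_smul]
        _ = mbar k Φ m (a ⊗ₜ[k] (1 : H)) := by rw [sum_smul_counit a ra]
    have rhs_key : (∑ i ∈ ra.index, ∑ j ∈ (rl i).index,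
          mbar k Φ m ((rl i).left j ⊗ₜ[k] mbar k Φ m (S ((rl i).right j) ⊗ₜ[k] ra.right i)))
        = a := by
      calc ∑ i ∈ ra.index, ∑ j ∈ (rl i).index,
            mbar k Φ m ((rl i).left j ⊗ₜ[k] mbar k Φ m (S ((rl i).right j) ⊗ₜ[k] ra.right i))
          = ∑ i ∈ ra.index, ∑ j ∈ (rl i).index,
            mbar k Φ m (mbar k Φ m ((rl i).left j ⊗ₜ[k] S ((rl i).right j)) ⊗ₜ[k] ra.right i) := by
            refine Finset.sum_congr rfl fun i _ => Finset.sum_congr rfl fun j _ => ?_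
            rw [assoc_mbar m Φ hm_comul hΦ_comul h3 h4 h5 hcoc]
        _ = ∑ i ∈ ra.index,
            mbar k Φ m ((∑ j ∈ (rl i).index,
              mbar k Φ m ((rl i).left j ⊗ₜ[k] S ((rl i).right j))) ⊗ₜ[k] ra.right i) := by
            refine Finset.sum_congr rfl fun i _ => ?_
            rw [TensorProduct.sum_tmul, map_sum]
        _ = ∑ i ∈ ra.index,
            mbar k Φ m (((Coalgebra.counit (R := k) (ra.left i)) • (1 : H)) ⊗ₜ[k] ra.right i) := by
            refine Finset.sum_congr rfl fun i _ => ?_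
            rw [hS_r _ (rl i)]
        _ = ∑ i ∈ ra.index, (Coalgebra.counit (R := k) (ra.left i)) •
              mbar k Φ m ((1 : H) ⊗ₜ[k] ra.right i) := by
            refine Finset.sum_congr rfl fun i _ => ?_
            rw [← TensorProduct.smul_tmul', map_smul]
        _ = ∑ i ∈ ra.index, (Coalgebra.counit (R := k) (ra.left i)) • ra.right i := by
            refine Finset.sum_congr rfl fun i _ => ?_
            rw [hmbar1]
        _ = a := sum_counit_smul a ra
    rw [← lhs_key, key, rhs_key]
  -- conclude
  refine LinearMap.ext fun a => ?_
  calc Φ a = Φ (mbar k Φ m (a ⊗ₜ[k] (1 : H))) := by rw [mbar_a_one a]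
    _ = mbar k Φ m (a ⊗ₜ[k] Φ 1) := h3p a 1
    _ = mbar k Φ m (a ⊗ₜ[k] (1 : H)) := by rw [hΦ1]
    _ = a := mbar_a_one a
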